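/- Let G be a chordal graph containing a 6-cycle on vertices a, b, c, d, e, f with edges ab, bc, cd, de, ef, fa. If bd, ce, and df are not edges of G, then ac, ad, and ae are edges of G. -/

import Mathlib

open SimpleGraph

/-- `f : ZMod n → V` traces an induced cycle of length `n` in `G`:
`f` is injective and adjacency holds exactly between consecutive vertices. -/
def IsInducedCycle {V : Type*} (G : SimpleGraph V) (n : ℕ) (f : ZMod n → V) : Prop :=
  Function.Injective f ∧ ∀ i j : ZMod n, G.Adj (f i) (f j) ↔ (j = i + 1 ∨ i = j + 1)

/-- A graph is chordal if it has no induced cycle of length at least 4. -/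
def Chordal {V : Type*} (G : SimpleGraph V) : Prop :=
  ∀ n, 4 ≤ n → ∀ f : ZMod n → V, ¬ IsInducedCycle G n f

/-- `G'` is a chordal completion of `G`. -/
def ChordalCompletion {V : Type*} (G G' : SimpleGraph V) : Prop :=
  Chordal G' ∧ G ≤ G'

/-- Minimal chordal completion: no proper spanning subgraph containing `G` is chordal. -/
def MinimalChordalCompletion {V : Type*} (G G' : SimpleGraph V) : Prop :=
  ChordalCompletion G G' ∧ ∀ H, ChordalCompletion G H → H ≤ G' → H = G'

private lemma noC4 {V : Type*} (G : SimpleGraph V) (hG : Chordal G) {x y z w : V}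
    (h1 : x≠y) (h2 : x≠z) (h3 : x≠w) (h4 : y≠z) (h5 : y≠w) (h6 : z≠w)
    (hxy : G.Adj x y) (hyz : G.Adj y z) (hzw : G.Adj z w) (hwx : G.Adj w x)
    (hxz : ¬G.Adj x z) (hyw : ¬G.Adj y w) : False := by
  apply hG 4 (by norm_num) ![x,y,z,w]
  have hi : ∀ i : ZMod 4, i = 0 ∨ i = 1 ∨ i = 2 ∨ i = 3 := by decide
  constructor
  · intro i j h
    rcases hi i with rfl|rfl|rfl|rfl <;> rcases hi j with rfl|rfl|rfl|rfl <;>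
      first
        | rfl
        | exact absurd h (by first | exact h1 | exact h2 | exact h3 | exact h4 | exact h5 | exact h6 | exact h1.symm | exact h2.symm | exact h3.symm | exact h4.symm | exact h5.symm | exact h6.symm)
  · intro i j
    rcases hi i with rfl|rfl|rfl|rfl <;> rcases hi j with rfl|rfl|rfl|rfl <;>
      first
        | exact iff_of_true (by first | exact hxy | exact hyz | exact hzw | exact hwx | exact hxy.symm | exact hyz.symm | exact hzw.symm | exact hwx.symm) (by decide)
        | exact iff_of_false (by first | exact hxz | exact hyw | exact fun h => hxz h.symm | exact fun h => hyw h.symm | exact G.loopless.irrefl _) (by decide)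

private lemma noC5 {V : Type*} (G : SimpleGraph V) (hG : Chordal G) {x y z w v : V}
    (h1 : x≠y) (h2 : x≠z) (h3 : x≠w) (h4 : x≠v) (h5 : y≠z) (h6 : y≠w) (h7 : y≠v)
    (h8 : z≠w) (h9 : z≠v) (h10 : w≠v)
    (hxy : G.Adj x y) (hyz : G.Adj y z) (hzw : G.Adj z w) (hwv : G.Adj w v) (hvx : G.Adj v x)
    (hxz : ¬G.Adj x z) (hxw : ¬G.Adj x w) (hyw : ¬G.Adj y w) (hyv : ¬G.Adj y v)
    (hzv : ¬G.Adj z v) : False := by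
  apply hG 5 (by norm_num) ![x,y,z,w,v]
  have hi : ∀ i : ZMod 5, i = 0 ∨ i = 1 ∨ i = 2 ∨ i = 3 ∨ i = 4 := by decide
  constructor
  · intro i j h
    rcases hi i with rfl|rfl|rfl|rfl|rfl <;> rcases hi j with rfl|rfl|rfl|rfl|rfl <;>
      first
        | rfl
        | exact absurd h (by first | exact h1 | exact h2 | exact h3 | exact h4 | exact h5 | exact h6 | exact h7 | exact h8 | exact h9 | exact h10 | exact h1.symm | exact h2.symm | exact h3.symm | exact h4.symm | exact h5.symm | exact h6.symm | exact h7.symm | exact h8.symm | exact h9.symm | exact h10.symm)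
  · intro i j
    rcases hi i with rfl|rfl|rfl|rfl|rfl <;> rcases hi j with rfl|rfl|rfl|rfl|rfl <;>
      first
        | exact iff_of_true (by first | exact hxy | exact hyz | exact hzw | exact hwv | exact hvx | exact hxy.symm | exact hyz.symm | exact hzw.symm | exact hwv.symm | exact hvx.symm) (by decide)
        | exact iff_of_false (by first | exact hxz | exact hxw | exact hyw | exact hyv | exact hzv | exact fun h => hxz h.symm | exact fun h => hxw h.symm | exact fun h => hyw h.symm | exact fun h => hyv h.symm | exact fun h => hzv h.symm | exact G.loopless.irrefl _) (by decide)

private lemma noC6 {V : Type*} (G : SimpleGraph V) (hG : Chordal G) {x y z w v u : V}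
    (h1 : x≠y) (h2 : x≠z) (h3 : x≠w) (h4 : x≠v) (h5 : x≠u) (h6 : y≠z) (h7 : y≠w)
    (h8 : y≠v) (h9 : y≠u) (h10 : z≠w) (h11 : z≠v) (h12 : z≠u) (h13 : w≠v)
    (h14 : w≠u) (h15 : v≠u)
    (hxy : G.Adj x y) (hyz : G.Adj y z) (hzw : G.Adj z w) (hwv : G.Adj w v)
    (hvu : G.Adj v u) (hux : G.Adj u x)
    (hxz : ¬G.Adj x z) (hxw : ¬G.Adj x w) (hxv : ¬G.Adj x v) (hyw : ¬G.Adj y w)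
    (hyv : ¬G.Adj y v) (hyu : ¬G.Adj y u) (hzv : ¬G.Adj z v) (hzu : ¬G.Adj z u)
    (hwu : ¬G.Adj w u) : False := by
  apply hG 6 (by norm_num) ![x,y,z,w,v,u]
  have hi : ∀ i : ZMod 6, i = 0 ∨ i = 1 ∨ i = 2 ∨ i = 3 ∨ i = 4 ∨ i = 5 := by decide
  constructor
  · intro i j h
    rcases hi i with rfl|rfl|rfl|rfl|rfl|rfl <;> rcases hi j with rfl|rfl|rfl|rfl|rfl|rfl <;>
      first
        | rfl
        | exact absurd h (by first | exact h1 | exact h2 | exact h3 | exact h4 | exact h5 | exact h6 | exact h7 | exact h8 | exact h9 | exact h10 | exact h11 | exact h12 | exact h13 | exact h14 | exact h15 | exact h1.symm | exact h2.symm | exact h3.symm | exact h4.symm | exact h5.symm | exact h6.symm | exact h7.symm | exact h8.symm | exact h9.symm | exact h10.symm | exact h11.symm | exact h12.symm | exact h13.symm | exact h14.symm | exact h15.symm)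
  · intro i j
    rcases hi i with rfl|rfl|rfl|rfl|rfl|rfl <;> rcases hi j with rfl|rfl|rfl|rfl|rfl|rfl <;>
      first
        | exact iff_of_true (by first | exact hxy | exact hyz | exact hzw | exact hwv | exact hvu | exact hux | exact hxy.symm | exact hyz.symm | exact hzw.symm | exact hwv.symm | exact hvu.symm | exact hux.symm) (by decide)
        | exact iff_of_false (by first | exact hxz | exact hxw | exact hxv | exact hyw | exact hyv | exact hyu | exact hzv | exact hzu | exact hwu | exact fun h => hxz h.symm | exact fun h => hxw h.symm | exact fun h => hxv h.symm | exact fun h => hyw h.symm | exact fun h => hyv h.symm | exact fun h => hyu h.symm | exact fun h => hzv h.symm | exact fun h => hzu h.symm | exact fun h => hwu h.symm | exact G.loopless.irrefl _) (by decide)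

theorem stmt_5 {V : Type*} (G : SimpleGraph V) (hG : Chordal G)
    (a b c d e f : V) (hdist : [a, b, c, d, e, f].Pairwise (· ≠ ·))
    (hab : G.Adj a b) (hbc : G.Adj b c) (hcd : G.Adj c d)
    (hde : G.Adj d e) (hef : G.Adj e f) (hfa : G.Adj f a)
    (hbd : ¬ G.Adj b d) (hce : ¬ G.Adj c e) (hdf : ¬ G.Adj d f) :
    G.Adj a c ∧ G.Adj a d ∧ G.Adj a e := by
  simp only [List.pairwise_cons, List.mem_cons, List.mem_singleton, List.not_mem_nil,
    List.Pairwise.nil] at hdist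
  obtain ⟨hA, hB, hC, hD, hE, -⟩ := hdist
  have nab : a ≠ b := hA b (by simp)
  have nac : a ≠ c := hA c (by simp)
  have nad : a ≠ d := hA d (by simp)
  have nae : a ≠ e := hA e (by simp)
  have naf : a ≠ f := hA f (by simp)
  have nbc : b ≠ c := hB c (by simp)
  have nbd : b ≠ d := hB d (by simp)
  have nbe : b ≠ e := hB e (by simp)
  have nbf : b ≠ f := hB f (by simp)
  have ncd : c ≠ d := hC d (by simp)
  have nce : c ≠ e := hC e (by simp)
  have ncf : c ≠ f := hC f (by simp)
  have nde : d ≠ e := hD e (by simp)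
  have ndf : d ≠ f := hD f (by simp)
  have nef : e ≠ f := hE f (by simp)
  -- be is not an edge, else b c d e is an induced C4
  have hbe : ¬ G.Adj b e := fun hbe =>
    noC4 G hG nbc nbd nbe ncd nce nde hbc hcd hde hbe.symm hbd hce
  -- cf is not an edge, else c d e f is an induced C4
  have hcf : ¬ G.Adj c f := fun hcf =>
    noC4 G hG ncd nce ncf nde ndf nef hcd hde hef hcf.symm hce hdf
  -- bf is not an edge, else b c d e f is an induced C5
  have hbf : ¬ G.Adj b f := fun hbf =>
    noC5 G hG nbc nbd nbe nbf ncd nce ncf nde ndf nef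
      hbc hcd hde hef hbf.symm hbd hbe hce hcf hdf
  -- key: ad is an edge
  have had : G.Adj a d := by
    by_contra had
    -- if ac, then a c d e f would be a C5 unless ae; then a c d e a is a C4: contradiction
    have hac' : ¬ G.Adj a c := by
      intro hac
      have hae' : ¬ G.Adj a e := fun hae =>
        noC4 G hG nac nad nae ncd nce nde hac hcd hde hae.symm had hce
      exact noC5 G hG nac nad nae naf ncd nce ncf nde ndf nef
        hac hcd hde hef hfa had hae' hce hcf hdf
    have hae' : ¬ G.Adj a e := by
      intro hae
      -- a b c d e would be a C5 with chords only possibly ac, ad — both absent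
      exact noC5 G hG nab nac nad nae nbc nbd nbe ncd nce nde
        hab hbc hcd hde hae.symm hac' had hbd hbe hce
    -- now a b c d e f is an induced C6
    exact noC6 G hG nab nac nad nae naf nbc nbd nbe nbf ncd nce ncf nde ndf nef
      hab hbc hcd hde hef hfa hac' had hae' hbd hbe hbf hce hcf hdf
  have hac : G.Adj a c := by
    by_contra hac
    exact noC4 G hG nab nac nad nbc nbd ncd hab hbc hcd had.symm hac hbd
  have hae : G.Adj a e := by
    by_contra hae
    exact noC4 G hG nad nae naf nde ndf nef had hde hef hfa hae hdf
  exact ⟨hac, had, hae⟩
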